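/- Let q ∈ (0,1), Ĉ > 0 and C' ≥ 1 with q·C' < 1, and let (e_n)_{n≥0} and (a_n)_{n≥0} be sequences of nonnegative real numbers with a_n > 0 for all n, satisfying e_{n+1} ≤ q·e_n + Ĉ·a_n and a_n ≤ C'·a_{n+1} for all n < N. Then e_N ≤ ((q·C')^N·e_0/a_0 + Ĉ/(q·(1 − q·C')))·a_N. -/

import Mathlib

/-- The recursion lemma used in the frozen Newton convergence proof: if
`e_{n+1} ≤ q·e_n + Ĉ·a_n` and `a_n ≤ C'·a_{n+1}` for all `n < N`, then
`e_N ≤ ((qC')^N·e_0/a_0 + Ĉ/(q(1−qC')))·a_N`. -/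
theorem stmt_12 (q Chat C' : ℝ) (hq0 : 0 < q) (hq1 : q < 1) (hChat : 0 < Chat)
    (hC' : 1 ≤ C') (hqC' : q * C' < 1)
    (e a : ℕ → ℝ) (he : ∀ n, 0 ≤ e n) (ha : ∀ n, 0 < a n) (N : ℕ)
    (hrec : ∀ n < N, e (n + 1) ≤ q * e n + Chat * a n)
    (hgrow : ∀ n < N, a n ≤ C' * a (n + 1)) :
    e N ≤ ((q * C') ^ N * e 0 / a 0 + Chat / (q * (1 - q * C'))) * a N := by
  have h1 : 0 < 1 - q * C' := by linarith
  set K := Chat * C' / (1 - q * C') with hK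
  have hKpos : 0 ≤ K := by positivity
  have hr0 : 0 ≤ e 0 / a 0 := div_nonneg (he 0) (ha 0).le
  have key : ∀ n, n ≤ N → e n ≤ ((q * C') ^ n * (e 0 / a 0) + K) * a n := by
    intro n
    induction n with
    | zero =>
      intro _
      have h0 : e 0 / a 0 * a 0 = e 0 := div_mul_cancel₀ _ (ha 0).ne'
      rw [pow_zero, one_mul]
      nlinarith [mul_nonneg hKpos (ha 0).le]
    | succ n ih =>
      intro hn
      have hn' : n < N := hn
      have ihn := ih hn'.le
      have h2 := hrec n hn'
      have h3 := hgrow n hn'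
      have han := ha n
      have han1 := ha (n + 1)
      have hpn : (0:ℝ) ≤ (q * C') ^ n := by positivity
      have hcoef : 0 ≤ q * ((q * C') ^ n * (e 0 / a 0) + K) + Chat := by positivity
      have step1 : e (n + 1) ≤ (q * ((q * C') ^ n * (e 0 / a 0) + K) + Chat) * a n := by
        nlinarith
      have step2 : e (n + 1) ≤ (q * ((q * C') ^ n * (e 0 / a 0) + K) + Chat) * (C' * a (n + 1)) := by
        calc e (n + 1) ≤ (q * ((q * C') ^ n * (e 0 / a 0) + K) + Chat) * a n := step1
          _ ≤ _ := by
            apply mul_le_mul_of_nonneg_left h3 hcoef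
      have hKeq : q * C' * K + Chat * C' = K := by
        have hKm : K * (1 - q * C') = Chat * C' := by rw [hK]; exact div_mul_cancel₀ _ h1.ne'
        linear_combination -hKm
      calc e (n + 1) ≤ (q * ((q * C') ^ n * (e 0 / a 0) + K) + Chat) * (C' * a (n + 1)) := step2
        _ = ((q * C') ^ (n + 1) * (e 0 / a 0) + (q * C' * K + Chat * C')) * a (n + 1) := by ring
        _ = ((q * C') ^ (n + 1) * (e 0 / a 0) + K) * a (n + 1) := by rw [hKeq]
  have hN := key N le_rfl
  have hKle : K ≤ Chat / (q * (1 - q * C')) := by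
    rw [hK, div_le_div_iff₀ h1 (by positivity)]
    nlinarith [mul_nonneg (mul_nonneg hChat.le h1.le) h1.le]
  have haN := ha N
  calc e N ≤ ((q * C') ^ N * (e 0 / a 0) + K) * a N := hN
    _ ≤ ((q * C') ^ N * e 0 / a 0 + Chat / (q * (1 - q * C'))) * a N := by
      rw [mul_div_assoc]
      apply mul_le_mul_of_nonneg_right (by linarith) haN.le
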